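/- In a weakly norming graph H without isolated vertices, every connected component has the same average degree 2·e(H)/v(H). -/

import Mathlib

open MeasureTheory Classical ENNReal

noncomputable def sym2Val {V Ω : Type*} (W : Ω → Ω → ℝ) (x : V → Ω) : Sym2 V → ℝ :=
  Sym2.lift ⟨fun i j => (W (x i) (x j) + W (x j) (x i)) / 2, fun i j => by simp [add_comm]⟩

/-- Homomorphism density `t(G, W)` of a graph `G` in a symmetric kernel `W`. -/
noncomputable def homDensity {V : Type} [Fintype V] {Ω : Type*} [MeasurableSpace Ω]
    (G : SimpleGraph V) (μ : Measure Ω) (W : Ω → Ω → ℝ) : ℝ :=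
  ∫ x : V → Ω, ∏ᶠ e ∈ G.edgeSet, sym2Val W x e ∂(Measure.pi fun _ => μ)

/-- Decorated homomorphism density `t(G, w)` for a decoration `w` of the edges. -/
noncomputable def decDensity {V : Type} [Fintype V] {Ω : Type*} [MeasurableSpace Ω]
    (G : SimpleGraph V) (μ : Measure Ω) (w : Sym2 V → Ω → Ω → ℝ) : ℝ :=
  ∫ x : V → Ω, ∏ᶠ e ∈ G.edgeSet, sym2Val (w e) x e ∂(Measure.pi fun _ => μ)

/-- Bounded symmetric measurable kernel. -/
def GoodKernel {Ω : Type*} [MeasurableSpace Ω] (W : Ω → Ω → ℝ) : Prop :=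
  Measurable (Function.uncurry W) ∧ (∀ x y, W x y = W y x) ∧ ∃ C, ∀ x y, |W x y| ≤ C

/-- Hatami's Hölder-type characterisation of weakly norming graphs. -/
def WeaklyNorming {V : Type} [Fintype V] (G : SimpleGraph V) : Prop :=
  ∀ (Ω : Type) (_ : MeasurableSpace Ω) (μ : Measure Ω), IsProbabilityMeasure μ →
    ∀ w : Sym2 V → Ω → Ω → ℝ, (∀ e, GoodKernel (w e)) → (∀ e x y, 0 ≤ w e x y) →
      decDensity G μ w ^ G.edgeSet.ncard ≤ ∏ᶠ e ∈ G.edgeSet, homDensity G μ (w e)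

/-- Hatami's Hölder-type characterisation of seminorming graphs. -/
def Seminorming {V : Type} [Fintype V] (G : SimpleGraph V) : Prop :=
  ∀ (Ω : Type) (_ : MeasurableSpace Ω) (μ : Measure Ω), IsProbabilityMeasure μ →
    ∀ w : Sym2 V → Ω → Ω → ℝ, (∀ e, GoodKernel (w e)) →
      decDensity G μ w ^ G.edgeSet.ncard ≤ ∏ᶠ e ∈ G.edgeSet, |homDensity G μ (w e)|

/-- Norming: seminorming and `‖·‖_H` vanishes only on a.e.-zero kernels. -/
def Norming {V : Type} [Fintype V] (G : SimpleGraph V) : Prop :=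
  Seminorming G ∧
    ∀ (Ω : Type) (_ : MeasurableSpace Ω) (μ : Measure Ω), IsProbabilityMeasure μ →
      ∀ W : Ω → Ω → ℝ, GoodKernel W → homDensity G μ W = 0 →
        ∀ᵐ p ∂(μ.prod μ), W p.1 p.2 = 0

-- the measure on Bool
noncomputable def muB : Measure Bool := (2:ℝ≥0∞)⁻¹ • Measure.dirac true + (2:ℝ≥0∞)⁻¹ • Measure.dirac false

instance : IsProbabilityMeasure muB := by
  constructor
  simp [muB, ENNReal.inv_two_add_inv_two]

lemma muB_true : muB {true} = 2⁻¹ := by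
  simp [muB, Measure.dirac_apply']

noncomputable def Wind : Bool → Bool → ℝ := fun a b => if a = true ∧ b = true then 1 else 0

lemma sym2Val_eval {V : Type} (W : Bool → Bool → ℝ) (hs : ∀ a b, W a b = W b a)
    (x : V → Bool) (i j : V) : sym2Val W x (s(i,j)) = W (x i) (x j) := by
  rw [sym2Val, Sym2.lift_mk]
  show (W (x i) (x j) + W (x j) (x i)) / 2 = W (x i) (x j)
  rw [hs (x j) (x i)]
  ring

-- indicator set
lemma integral_indicator_set {V : Type} [Fintype V] (S : Set V) :
    ∫ x : V → Bool, (if ∀ v ∈ S, x v = true then (1:ℝ) else 0) ∂(Measure.pi fun _ => muB)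
      = (1/2 : ℝ) ^ S.ncard := by
  classical
  set T : Set (V → Bool) := Set.univ.pi (fun v => if v ∈ S then ({true} : Set Bool) else Set.univ) with hT
  have hmem : ∀ x : V → Bool, x ∈ T ↔ ∀ v ∈ S, x v = true := by
    intro x
    simp only [hT, Set.mem_pi, Set.mem_univ, true_implies]
    constructor
    · intro h v hv; have := h v; simp [hv] at this; exact this
    · intro h v; by_cases hv : v ∈ S <;> simp [hv, h]
  have hfun : (fun x : V → Bool => if ∀ v ∈ S, x v = true then (1:ℝ) else 0)
      = T.indicator (fun _ => (1:ℝ)) := by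
    funext x
    by_cases h : ∀ v ∈ S, x v = true
    · rw [if_pos h, Set.indicator_of_mem ((hmem x).2 h)]
    · rw [if_neg h, Set.indicator_of_notMem (fun hx => h ((hmem x).1 hx))]
  rw [hfun, integral_indicator_const (1:ℝ)
    (MeasurableSet.univ_pi (fun v => by by_cases hv : v ∈ S <;> simp [hv]))]
  rw [measureReal_def, Measure.pi_pi]
  have : ∀ v : V, muB (if v ∈ S then ({true} : Set Bool) else Set.univ) = if v ∈ S then 2⁻¹ else 1 := by
    intro v
    by_cases hv : v ∈ S
    · simp [hv, muB_true]
    · rw [if_neg hv, if_neg hv, measure_univ]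
  simp_rw [this]
  have hSfin : S.Finite := Set.toFinite S
  have : ∀ v : V, (if v ∈ S then (2⁻¹:ℝ≥0∞) else 1) = (if v ∈ hSfin.toFinset then (2⁻¹:ℝ≥0∞) else 1) := by
    intro v; exact if_congr (hSfin.mem_toFinset).symm rfl rfl
  simp_rw [this]
  rw [Finset.prod_ite_mem, Finset.univ_inter, Finset.prod_const,
    ← Set.ncard_eq_toFinset_card S hSfin]
  simp [ENNReal.toReal_pow]

lemma wind_symm : ∀ a b, Wind a b = Wind b a := by
  intro a b; simp [Wind, and_comm]

lemma wind_good : GoodKernel Wind :=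
  ⟨measurable_of_countable _, wind_symm, 1, fun a b => by unfold Wind; split <;> norm_num⟩

lemma one_good : GoodKernel (fun _ _ : Bool => (1:ℝ)) :=
  ⟨measurable_const, fun _ _ => rfl, 1, fun _ _ => by norm_num⟩

lemma forall_mem_sym2 {α : Type*} (P : α → Prop) (i j : α) :
    (∀ v ∈ (s(i,j) : Sym2 α), P v) ↔ P i ∧ P j := by
  constructor
  · intro h; exact ⟨h i (by simp), h j (by simp)⟩
  · rintro ⟨h1, h2⟩ v hv; rcases Sym2.mem_iff.1 hv with rfl | rfl <;> assumption

noncomputable def wS {V : Type} (S : Set V) : Sym2 V → Bool → Bool → ℝ :=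
  fun e => if (∀ v ∈ e, v ∈ S) then Wind else fun _ _ => 1

lemma wS_good {V : Type} (S : Set V) (e : Sym2 V) : GoodKernel (wS S e) := by
  unfold wS; split
  · exact wind_good
  · exact one_good

lemma wS_nonneg {V : Type} (S : Set V) (e : Sym2 V) (a b : Bool) : 0 ≤ wS S e a b := by
  unfold wS; split
  · unfold Wind; split <;> norm_num
  · norm_num

lemma prod_wS {V : Type} [Fintype V] (H : SimpleGraph V) (S : Set V)
    (hcov : ∀ v ∈ S, ∃ u, H.Adj v u ∧ u ∈ S) (x : V → Bool) :
    ∏ᶠ e ∈ H.edgeSet, sym2Val (wS S e) x e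
      = if ∀ v ∈ S, x v = true then (1:ℝ) else 0 := by
  classical
  have hfin : H.edgeSet.Finite := Set.toFinite _
  have hcongr : ∀ e ∈ H.edgeSet, sym2Val (wS S e) x e
      = (if (∀ v ∈ e, v ∈ S) then (if (∀ v ∈ e, x v = true) then (1:ℝ) else 0) else 1) := by
    intro e _
    induction e using Sym2.ind with
    | _ i j =>
      by_cases hc : ∀ v ∈ (s(i,j) : Sym2 V), v ∈ S
      · rw [if_pos hc, show wS S s(i,j) = Wind from if_pos hc, sym2Val_eval Wind wind_symm]
        rw [Wind, if_congr (forall_mem_sym2 (fun v => x v = true) i j) rfl rfl]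
      · rw [if_neg hc, show wS S s(i,j) = (fun _ _ => (1:ℝ)) from if_neg hc,
          sym2Val_eval (fun _ _ => (1:ℝ)) (fun _ _ => rfl)]
  rw [finprod_mem_congr rfl hcongr, finprod_mem_eq_finite_toFinset_prod _ hfin]
  by_cases hx : ∀ v ∈ S, x v = true
  · rw [if_pos hx]
    apply Finset.prod_eq_one
    intro e _
    by_cases hc : ∀ v ∈ e, v ∈ S
    · rw [if_pos hc, if_pos (fun v hv => hx v (hc v hv))]
    · rw [if_neg hc]
  · rw [if_neg hx]
    push_neg at hx
    obtain ⟨v, hvS, hxv⟩ := hx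
    obtain ⟨u, hadj, huS⟩ := hcov v hvS
    apply Finset.prod_eq_zero (i := s(v,u)) (hfin.mem_toFinset.2 ((SimpleGraph.mem_edgeSet H).2 hadj))
    rw [if_pos ((forall_mem_sym2 (fun w => w ∈ S) v u).2 ⟨hvS, huS⟩),
      if_neg (fun h => hxv (((forall_mem_sym2 (fun w => x w = true) v u).1 h).1))]

lemma decD {V : Type} [Fintype V] (H : SimpleGraph V) (S : Set V)
    (hcov : ∀ v ∈ S, ∃ u, H.Adj v u ∧ u ∈ S) :
    decDensity H muB (wS S) = (1/2 : ℝ) ^ S.ncard := by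
  unfold decDensity
  simp_rw [prod_wS H S hcov]
  exact integral_indicator_set S

lemma homD_W {V : Type} [Fintype V] (H : SimpleGraph V)
    (hnoiso : ∀ v : V, ∃ u, H.Adj v u) :
    homDensity H muB Wind = (1/2 : ℝ) ^ (Fintype.card V) := by
  have hcov : ∀ v ∈ (Set.univ : Set V), ∃ u, H.Adj v u ∧ u ∈ Set.univ :=
    fun v _ => ⟨(hnoiso v).choose, (hnoiso v).choose_spec, trivial⟩
  have h2 : homDensity H muB Wind = decDensity H muB (wS Set.univ) := by
    unfold homDensity decDensity
    congr 1
    funext x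
    exact finprod_mem_congr rfl (fun e _ => by
      rw [show wS Set.univ e = Wind from if_pos (fun v _ => trivial)])
  rw [h2, decD H Set.univ hcov, Set.ncard_univ, Nat.card_eq_fintype_card]

lemma homD_one {V : Type} [Fintype V] (H : SimpleGraph V) :
    homDensity H muB (fun _ _ => (1:ℝ)) = 1 := by
  unfold homDensity
  have h1 : ∀ x : V → Bool, ∏ᶠ e ∈ H.edgeSet, sym2Val (fun _ _ => (1:ℝ)) x e = 1 := by
    intro x
    apply finprod_mem_of_eqOn_one
    intro e _
    induction e using Sym2.ind with
    | _ i j =>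
      rw [sym2Val_eval (fun _ _ => (1:ℝ)) (fun _ _ => rfl)]
      rfl
  simp_rw [h1]
  simp

lemma rhs_prod {V : Type} [Fintype V] (H : SimpleGraph V)
    (hnoiso : ∀ v : V, ∃ u, H.Adj v u) (S : Set V) :
    ∏ᶠ e ∈ H.edgeSet, homDensity H muB (wS S e)
      = ((1/2:ℝ) ^ Fintype.card V) ^ {e ∈ H.edgeSet | ∀ v ∈ e, v ∈ S}.ncard := by
  classical
  have hfin : H.edgeSet.Finite := Set.toFinite _
  have hcongr : ∀ e ∈ H.edgeSet, homDensity H muB (wS S e)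
      = if (∀ v ∈ e, v ∈ S) then ((1/2:ℝ) ^ Fintype.card V) else 1 := by
    intro e _
    by_cases hc : ∀ v ∈ e, v ∈ S
    · rw [if_pos hc, show wS S e = Wind from if_pos hc, homD_W H hnoiso]
    · rw [if_neg hc, show wS S e = (fun _ _ => (1:ℝ)) from if_neg hc, homD_one H]
  rw [finprod_mem_congr rfl hcongr, finprod_mem_eq_finite_toFinset_prod _ hfin,
    ← Finset.prod_filter, Finset.prod_const]
  congr 1
  have : {e ∈ H.edgeSet | ∀ v ∈ e, v ∈ S}
      = ↑(hfin.toFinset.filter (fun e => ∀ v ∈ e, v ∈ S)) := by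
    ext e
    simp only [Finset.coe_filter, Set.Finite.mem_toFinset, Set.mem_setOf_eq]
  rw [this, Set.ncard_coe_finset]

lemma key_ineq {V : Type} [Fintype V] (H : SimpleGraph V) (hH : WeaklyNorming H)
    (hnoiso : ∀ v : V, ∃ u, H.Adj v u) (S : Set V)
    (hcov : ∀ v ∈ S, ∃ u, H.Adj v u ∧ u ∈ S) :
    Fintype.card V * {e ∈ H.edgeSet | ∀ v ∈ e, v ∈ S}.ncard
      ≤ S.ncard * H.edgeSet.ncard := by
  have h := hH Bool inferInstance muB inferInstance (wS S)
    (fun e => wS_good S e) (fun e a b => wS_nonneg S e a b)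
  rw [decD H S hcov, rhs_prod H hnoiso S, ← pow_mul, ← pow_mul] at h
  exact ((pow_right_strictAnti₀ (by norm_num : (0:ℝ) < 1/2) (by norm_num))|>.le_iff_ge).1 h

lemma edge_mem_same {V : Type} (H : SimpleGraph V) {v w : V} :
    ∀ e : Sym2 V, e ∈ H.edgeSet → v ∈ e → w ∈ e →
      H.connectedComponentMk v = H.connectedComponentMk w := by
  intro e
  induction e using Sym2.ind with
  | _ i j =>
    intro he hv hw
    have hadj : H.Adj i j := (SimpleGraph.mem_edgeSet H).1 he
    have h1 : ∀ u, u ∈ (s(i,j) : Sym2 V) → H.connectedComponentMk u = H.connectedComponentMk i := by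
      intro u hu
      rcases Sym2.mem_iff.1 hu with rfl | rfl
      · rfl
      · exact SimpleGraph.ConnectedComponent.sound hadj.symm.reachable
    rw [h1 v hv, h1 w hw]

lemma supp_closed {V : Type} (H : SimpleGraph V) (c : H.ConnectedComponent)
    {a b : V} (hadj : H.Adj a b) (ha : a ∈ c.supp) : b ∈ c.supp := by
  rw [SimpleGraph.ConnectedComponent.mem_supp_iff] at ha ⊢
  rw [← ha]
  exact SimpleGraph.ConnectedComponent.sound hadj.symm.reachable

def compGraph {V : Type} (H : SimpleGraph V) (c : H.ConnectedComponent) : SimpleGraph V where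
  Adj a b := H.Adj a b ∧ a ∈ c.supp ∧ b ∈ c.supp
  symm := ⟨fun a b ⟨h, ha, hb⟩ => ⟨h.symm, hb, ha⟩⟩
  loopless := ⟨fun a ⟨h, _⟩ => H.loopless.irrefl a h⟩

lemma compGraph_edgeSet {V : Type} (H : SimpleGraph V) (c : H.ConnectedComponent) :
    (compGraph H c).edgeSet = {e ∈ H.edgeSet | ∀ v ∈ e, v ∈ c.supp} := by
  ext e
  induction e using Sym2.ind with
  | _ i j =>
    simp only [SimpleGraph.mem_edgeSet, Set.mem_setOf_eq, compGraph,
      forall_mem_sym2 (fun v => v ∈ c.supp) i j]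

lemma compGraph_nbhd {V : Type} (H : SimpleGraph V) (c : H.ConnectedComponent) (v : V) :
    (compGraph H c).neighborSet v = if v ∈ c.supp then H.neighborSet v else ∅ := by
  by_cases hv : v ∈ c.supp
  · rw [if_pos hv]
    ext u
    simp only [SimpleGraph.mem_neighborSet, compGraph]
    exact ⟨fun ⟨h, _, _⟩ => h, fun h => ⟨h, hv, supp_closed H c h hv⟩⟩
  · rw [if_neg hv]
    ext u
    simp only [SimpleGraph.mem_neighborSet, compGraph, Set.mem_empty_iff_false, iff_false]
    exact fun ⟨_, ha, _⟩ => hv ha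

lemma handshake_comp {V : Type} [Fintype V] (H : SimpleGraph V) (c : H.ConnectedComponent) :
    ∑ v ∈ (c.supp.toFinite.toFinset), (H.neighborSet v).ncard
      = 2 * {e ∈ H.edgeSet | ∀ v ∈ e, v ∈ c.supp}.ncard := by
  classical
  haveI : DecidableRel (compGraph H c).Adj := Classical.decRel _
  have h := SimpleGraph.sum_degrees_eq_twice_card_edges (compGraph H c)
  have hdeg : ∀ v : V, (compGraph H c).degree v = ((compGraph H c).neighborSet v).ncard := by
    intro v
    rw [Set.ncard_eq_toFinset_card']
    try congr 1
  have hL : ∑ v : V, (compGraph H c).degree v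
      = ∑ v ∈ (c.supp.toFinite.toFinset), (H.neighborSet v).ncard := by
    rw [← Finset.sum_subset (Finset.subset_univ (c.supp.toFinite.toFinset))]
    · apply Finset.sum_congr rfl
      intro v hv
      rw [hdeg, compGraph_nbhd, if_pos (c.supp.toFinite.mem_toFinset.1 hv)]
    · intro v _ hv
      rw [hdeg, compGraph_nbhd, if_neg (fun h => hv (c.supp.toFinite.mem_toFinset.2 h))]
      simp
  have hR : (compGraph H c).edgeFinset.card
      = {e ∈ H.edgeSet | ∀ v ∈ e, v ∈ c.supp}.ncard := by
    rw [← compGraph_edgeSet, Set.ncard_eq_toFinset_card']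
    try congr 1
  rw [← hL, h, hR]

lemma sum_supp_ncard {V : Type} [Fintype V] (H : SimpleGraph V)
    [Fintype H.ConnectedComponent] :
    ∑ c : H.ConnectedComponent, c.supp.ncard = Fintype.card V := by
  classical
  have h := Finset.card_eq_sum_card_fiberwise
    (f := H.connectedComponentMk) (s := Finset.univ) (t := Finset.univ)
    (fun x _ => Finset.mem_univ _)
  rw [Fintype.card, h]
  apply Finset.sum_congr rfl
  intro c _
  rw [← Set.ncard_coe_finset]
  congr 1
  ext v
  simp [SimpleGraph.ConnectedComponent.mem_supp_iff]

lemma sum_ec_ncard {V : Type} [Fintype V] (H : SimpleGraph V)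
    [Fintype H.ConnectedComponent] :
    ∑ c : H.ConnectedComponent, {e ∈ H.edgeSet | ∀ v ∈ e, v ∈ c.supp}.ncard
      = H.edgeSet.ncard := by
  classical
  have hfin : H.edgeSet.Finite := Set.toFinite _
  have h := Finset.card_eq_sum_card_fiberwise
    (f := fun e : Sym2 V => H.connectedComponentMk e.out.1) (s := hfin.toFinset)
    (t := Finset.univ) (fun x _ => Finset.mem_univ _)
  rw [Set.ncard_eq_toFinset_card _ hfin, h]
  apply Finset.sum_congr rfl
  intro c _
  rw [← Set.ncard_coe_finset]
  congr 1
  ext e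
  simp only [Finset.coe_filter, Set.Finite.mem_toFinset, Set.mem_setOf_eq]
  constructor
  · rintro ⟨he, hc⟩
    exact ⟨he, (SimpleGraph.ConnectedComponent.mem_supp_iff _ _).1 (hc _ (Sym2.out_fst_mem e))⟩
  · rintro ⟨he, hc⟩
    refine ⟨he, fun v hv => ?_⟩
    rw [SimpleGraph.ConnectedComponent.mem_supp_iff, ← hc]
    exact edge_mem_same H e he hv (Sym2.out_fst_mem e)


/-- Every connected component of a weakly norming graph `H` without isolated vertices has
the same average degree, namely `2·e(H)/v(H)`. -/
theorem weaklyNorming_components_avg_degree {V : Type} [Fintype V]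
    (H : SimpleGraph V) (hH : WeaklyNorming H)
    (hnoiso : ∀ v : V, ∃ u, H.Adj v u) (c : H.ConnectedComponent) :
    (∑ᶠ v ∈ c.supp, ((H.neighborSet v).ncard : ℝ)) / (c.supp.ncard : ℝ)
      = 2 * (H.edgeSet.ncard : ℝ) / (Fintype.card V : ℝ) := by
  classical
  haveI : Fintype H.ConnectedComponent := Fintype.ofFinite _
  -- the key equality card V * e(c) = v(c) * e(H)
  have hkey : ∀ c' : H.ConnectedComponent,
      Fintype.card V * {e ∈ H.edgeSet | ∀ v ∈ e, v ∈ c'.supp}.ncard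
        = c'.supp.ncard * H.edgeSet.ncard := by
    have hle : ∀ c' ∈ (Finset.univ : Finset H.ConnectedComponent),
        Fintype.card V * {e ∈ H.edgeSet | ∀ v ∈ e, v ∈ c'.supp}.ncard
          ≤ c'.supp.ncard * H.edgeSet.ncard := by
      intro c' _
      apply key_ineq H hH hnoiso
      intro v hv
      obtain ⟨u, hu⟩ := hnoiso v
      exact ⟨u, hu, supp_closed H c' hu hv⟩
    have hsums : ∑ c' : H.ConnectedComponent,
        Fintype.card V * {e ∈ H.edgeSet | ∀ v ∈ e, v ∈ c'.supp}.ncard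
          = ∑ c' : H.ConnectedComponent, c'.supp.ncard * H.edgeSet.ncard := by
      rw [← Finset.mul_sum, sum_ec_ncard, ← Finset.sum_mul, sum_supp_ncard, mul_comm]
    intro c'
    exact (Finset.sum_eq_sum_iff_of_le hle).1 hsums c' (Finset.mem_univ c')
  -- handshake
  have hfs : ∑ᶠ v ∈ c.supp, ((H.neighborSet v).ncard : ℝ)
      = ((2 * {e ∈ H.edgeSet | ∀ v ∈ e, v ∈ c.supp}.ncard : ℕ) : ℝ) := by
    rw [finsum_mem_eq_finite_toFinset_sum _ (Set.toFinite c.supp),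
      ← Nat.cast_sum, handshake_comp H c]
  rw [hfs]
  -- nonvanishing
  obtain ⟨v, hv⟩ := c.exists_rep
  have hvsupp : v ∈ c.supp := by
    rw [SimpleGraph.ConnectedComponent.mem_supp_iff]
    exact hv
  have hvc : 0 < c.supp.ncard := (Set.ncard_pos (Set.toFinite _)).2 ⟨v, hvsupp⟩
  have hcard : 0 < Fintype.card V := Fintype.card_pos_iff.2 ⟨v⟩
  have hkey' : ((Fintype.card V : ℝ)) * ({e ∈ H.edgeSet | ∀ v ∈ e, v ∈ c.supp}.ncard : ℝ)
      = (c.supp.ncard : ℝ) * (H.edgeSet.ncard : ℝ) := by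
    exact_mod_cast congrArg (Nat.cast : ℕ → ℝ) (hkey c)
  rw [div_eq_div_iff (by exact_mod_cast hvc.ne' : (c.supp.ncard:ℝ) ≠ 0) (by exact_mod_cast hcard.ne' : (Fintype.card V:ℝ) ≠ 0)]
  push_cast
  linear_combination 2 * hkey'
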